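/- Let t, r, s be integers with 2 ≤ t ≤ 10 and 1 ≤ r < s ≤ t. Then for every integer n ≥ 9, D_2(r,t;n) ≥ D_2(s,t;n). -/

import Mathlib

open PowerSeries

namespace Theorems100

noncomputable section

variable {α : Type*}

open Finset
open scoped Classical
open Finset.HasAntidiagonal

universe u
variable {ι : Type u}

/-- A convenience constructor for the power series whose coefficients indicate a subset. -/
def indicatorSeries (α : Type*) [Semiring α] (s : Set ℕ) : PowerSeries α :=
  PowerSeries.mk fun n => if n ∈ s then 1 else 0

theorem coeff_indicator (s : Set ℕ) [Semiring α] (n : ℕ) :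
    coeff (R := α) n (indicatorSeries _ s) = if n ∈ s then 1 else 0 :=
  coeff_mk _ _

theorem coeff_indicator_pos (s : Set ℕ) [Semiring α] (n : ℕ) (h : n ∈ s) :
    coeff (R := α) n (indicatorSeries _ s) = 1 := by rw [coeff_indicator, if_pos h]

theorem coeff_indicator_neg (s : Set ℕ) [Semiring α] (n : ℕ) (h : n ∉ s) :
    coeff (R := α) n (indicatorSeries _ s) = 0 := by rw [coeff_indicator, if_neg h]

theorem constantCoeff_indicator (s : Set ℕ) [Semiring α] :
    constantCoeff (R := α) (indicatorSeries _ s) = if 0 ∈ s then 1 else 0 :=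
  rfl

theorem two_series (i : ℕ) [Semiring α] :
    1 + (X : PowerSeries α) ^ i.succ = indicatorSeries α {0, i.succ} := by
  ext n
  simp only [coeff_indicator, coeff_one, coeff_X_pow, Set.mem_insert_iff, Set.mem_singleton_iff,
    map_add]
  cases' n with d
  · simp [(Nat.succ_ne_zero i).symm]
  · simp [Nat.succ_ne_zero d]
theorem partialGF_prop (α : Type*) [CommSemiring α] (n : ℕ) (s : Finset ℕ) (hs : ∀ i ∈ s, 0 < i)
    (c : ℕ → Set ℕ) (hc : ∀ i, i ∉ s → 0 ∈ c i) :
    #{p : n.Partition | (∀ j, p.parts.count j ∈ c j) ∧ ∀ j ∈ p.parts, j ∈ s} =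
      coeff (R := α) n (∏ i ∈ s, indicatorSeries α ((· * i) '' c i)) := by
  simp_rw [coeff_prod, coeff_indicator, prod_boole, sum_boole]
  apply congr_arg
  simp only [mem_univ, forall_true_left, not_and, not_forall, exists_prop,
    Set.mem_image, not_exists]
  set φ : (a : Nat.Partition n) →
    a ∈ filter (fun p ↦ (∀ (j : ℕ), Multiset.count j p.parts ∈ c j) ∧ ∀ j ∈ p.parts, j ∈ s) univ →
    ℕ →₀ ℕ := fun p _ => {
      toFun := fun i => Multiset.count i p.parts • i
      support := Finset.filter (fun i => i ≠ 0) p.parts.toFinset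
      mem_support_toFun := fun a => by
        simp only [smul_eq_mul, ne_eq, mul_eq_zero, Multiset.count_eq_zero]
        rw [not_or, not_not]
        simp only [Multiset.mem_toFinset, not_not, mem_filter] }
  refine Finset.card_bij φ ?_ ?_ ?_
  · intro a ha
    simp only [φ, not_forall, not_exists, not_and, exists_prop, mem_filter]
    rw [mem_finsuppAntidiag]
    dsimp only [ne_eq, smul_eq_mul, id_eq, eq_mpr_eq_cast, le_eq_subset, Finsupp.coe_mk]
    simp only [mem_univ, forall_true_left, not_and, not_forall, exists_prop,
      mem_filter, true_and] at ha
    refine ⟨⟨?_, fun i ↦ ?_⟩, fun i _ ↦ ⟨a.parts.count i, ha.1 i, rfl⟩⟩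
    · conv_rhs => simp [← a.parts_sum]
      rw [sum_multiset_count_of_subset _ s]
      · simp only [smul_eq_mul]
      · intro i
        simp only [Multiset.mem_toFinset, not_not, mem_filter]
        apply ha.2
    · simp only [ne_eq, Multiset.mem_toFinset, not_not, mem_filter, and_imp]
      exact fun hi _ ↦ ha.2 i hi
  · intro p₁ hp₁ p₂ hp₂ h
    apply Nat.Partition.ext
    simp only [true_and, mem_univ, mem_filter] at hp₁ hp₂
    ext i
    simp only [φ, ne_eq, Multiset.mem_toFinset, not_not, smul_eq_mul, Finsupp.mk.injEq] at h
    by_cases hi : i = 0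
    · rw [hi]
      rw [Multiset.count_eq_zero_of_notMem]
      · rw [Multiset.count_eq_zero_of_notMem]
        intro a; exact Nat.lt_irrefl 0 (hs 0 (hp₂.2 0 a))
      intro a; exact Nat.lt_irrefl 0 (hs 0 (hp₁.2 0 a))
    · rw [← mul_left_inj' hi]
      rw [funext_iff] at h
      exact h.2 i
  · simp only [φ, mem_filter, mem_finsuppAntidiag, mem_univ, exists_prop, true_and, and_assoc]
    rintro f ⟨hf, hf₃, hf₄⟩
    have hf' : f ∈ finsuppAntidiag s n := mem_finsuppAntidiag.mpr ⟨hf, hf₃⟩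
    simp only [mem_finsuppAntidiag] at hf'
    refine ⟨⟨∑ i ∈ s, Multiset.replicate (f i / i) i, ?_, ?_⟩, ?_, ?_, ?_⟩
    · intro i hi
      simp only [exists_prop, Multiset.mem_sum, mem_map, Function.Embedding.coeFn_mk] at hi
      rcases hi with ⟨t, ht, z⟩
      apply hs
      rwa [Multiset.eq_of_mem_replicate z]
    · simp_rw [Multiset.sum_sum, Multiset.sum_replicate, Nat.nsmul_eq_mul]
      rw [← hf'.1]
      refine sum_congr rfl fun i hi => Nat.div_mul_cancel ?_
      rcases hf₄ i hi with ⟨w, _, hw₂⟩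
      rw [← hw₂]
      exact dvd_mul_left _ _
    · intro i
      simp_rw [Multiset.count_sum', Multiset.count_replicate, sum_ite_eq']
      split_ifs with h
      · rcases hf₄ i h with ⟨w, hw₁, hw₂⟩
        rwa [← hw₂, Nat.mul_div_cancel _ (hs i h)]
      · exact hc _ h
    · intro i hi
      rw [Multiset.mem_sum] at hi
      rcases hi with ⟨j, hj₁, hj₂⟩
      rwa [Multiset.eq_of_mem_replicate hj₂]
    · ext i
      simp_rw [Multiset.count_sum', Multiset.count_replicate, sum_ite_eq']
      simp only [ne_eq, Multiset.mem_toFinset, not_not, smul_eq_mul, ite_mul,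
        zero_mul, Finsupp.coe_mk]
      split_ifs with h
      · apply Nat.div_mul_cancel
        rcases hf₄ i h with ⟨w, _, hw₂⟩
        apply Dvd.intro_left _ hw₂
      · apply symm
        rw [← Finsupp.notMem_support_iff]
        exact notMem_mono hf'.2 h

end
end Theorems100

open Real

/-- The number of parts congruent to `r` modulo `t` among all `k`-regular
partitions of `n` (partitions where every part has multiplicity less than `k`). -/
def Dk (k r t n : ℕ) : ℕ :=
  ∑ p ∈ Finset.univ.filter
      (fun p : Nat.Partition n => ∀ i ∈ p.parts, p.parts.count i < k),
    Multiset.card (p.parts.filter (fun j => j % t = r % t))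

open Finset
open scoped Classical

namespace My
open Theorems100 PowerSeries

/-- number of distinct partitions of `A` all of whose parts satisfy `S` -/
noncomputable def GP (S : ℕ → Prop) (A : ℕ) : ℕ :=
  (Finset.univ.filter (fun p : Nat.Partition A => p.parts.Nodup ∧ ∀ j ∈ p.parts, S j)).card

theorem GP_eq_coeff (S : ℕ → Prop) (A M : ℕ) (hM : A < M) (T : Finset ℕ)
    (hTm : ∀ i, i ∈ T ↔ i < M ∧ (0 < i ∧ S i)) :
    (GP S A : ℚ) = coeff (R := ℚ) A (∏ i ∈ T, (1 + (X : PowerSeries ℚ) ^ i)) := by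
  have hTe : T = (range M).filter (fun i => 0 < i ∧ S i) := by
    ext a
    simp only [hTm, mem_filter, mem_range]
  rw [hTe]
  have key := partialGF_prop ℚ A ((range M).filter fun i => 0 < i ∧ S i)
      (fun i hi => (mem_filter.1 hi).2.1) (fun _ => {0, 1}) (fun _ _ => Or.inl rfl)
  rw [GP]
  convert key using 2
  · rfl
  · congr 1
    apply Finset.filter_congr
    intro p _
    constructor
    · rintro ⟨hnd, hS⟩
      refine ⟨fun j => ?_, fun j hj => ?_⟩
      · have h1 := Multiset.nodup_iff_count_le_one.1 hnd j
        interval_cases h : p.parts.count j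
        · exact Or.inl rfl
        · exact Or.inr rfl
      · refine mem_filter.2 ⟨mem_range.2 ?_, p.parts_pos hj, hS j hj⟩
        have : j ≤ A := by
          simpa [p.parts_sum] using Multiset.single_le_sum (fun _ _ => Nat.zero_le _) _ hj
        omega
    · rintro ⟨hc, hj⟩
      refine ⟨Multiset.nodup_iff_count_le_one.2 fun j => ?_, fun j hjp => ?_⟩
      · have h := hc j
        simp only [Set.mem_insert_iff, Set.mem_singleton_iff] at h
        omega
      · exact (mem_filter.1 (hj j hjp)).2.2
  · apply Finset.prod_congr rfl
    intro i hi
    obtain ⟨hpos, -⟩ := (mem_filter.1 hi).2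
    obtain ⟨i, rfl⟩ : ∃ j, i = j + 1 := ⟨i - 1, by omega⟩
    rw [two_series]
    congr 1
    rw [Set.image_pair]
    simp

theorem telescope (T : Finset ℕ) (K : ℕ) (hpow : ∀ j < K, 2 ^ j ∈ T) :
    (1 - (X : PowerSeries ℚ)) * ∏ i ∈ T, (1 + (X : PowerSeries ℚ) ^ i) =
      (1 - X ^ 2 ^ K) * ∏ i ∈ T \ (range K).image (2 ^ ·), (1 + X ^ i) := by
  induction K with
  | zero => simp
  | succ K ih =>
    rw [ih (fun j hj => hpow j (by omega))]
    have hmem : 2 ^ K ∈ T \ (range K).image (2 ^ ·) := by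
      refine mem_sdiff.2 ⟨hpow K (by omega), ?_⟩
      simp only [mem_image, mem_range]
      rintro ⟨j, hj, hje⟩
      exact absurd hje (by have := Nat.pow_lt_pow_right (by norm_num : 1 < 2) hj; omega)
    rw [Finset.prod_eq_mul_prod_sdiff_singleton_of_mem hmem (fun i => 1 + (X : PowerSeries ℚ) ^ i)]
    have hset : (T \ (range K).image (2 ^ ·)) \ {2 ^ K} =
        T \ (range (K + 1)).image (2 ^ ·) := by
      ext a
      simp only [mem_sdiff, mem_image, mem_range, mem_singleton]
      constructor
      · rintro ⟨⟨ha, hb⟩, hc⟩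
        exact ⟨ha, by rintro ⟨j, hj, rfl⟩; rcases Nat.lt_succ_iff_lt_or_eq.1 hj with h | rfl
                      · exact hb ⟨j, h, rfl⟩
                      · exact hc rfl⟩
      · rintro ⟨ha, hb⟩
        exact ⟨⟨ha, fun ⟨j, hj, hje⟩ => hb ⟨j, by omega, hje⟩⟩,
          fun h => hb ⟨K, by omega, h.symm⟩⟩
    rw [hset]
    have : (1 - (X : PowerSeries ℚ) ^ 2 ^ K) * (1 + X ^ 2 ^ K) = 1 - X ^ 2 ^ (K + 1) := by
      have h2 : (2 : ℕ) ^ (K + 1) = 2 ^ K * 2 := by rw [pow_succ]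
      rw [h2, pow_mul]
      ring
    rw [← mul_assoc, this]


theorem coeff_one_sub_X_mul (f : PowerSeries ℚ) (N : ℕ) :
    coeff (R := ℚ) (N + 1) ((1 - X) * f) = coeff (R := ℚ) (N + 1) f - coeff (R := ℚ) N f := by
  rw [sub_mul, one_mul, map_sub, coeff_succ_X_mul]

theorem coeff_one_sub_Xpow_mul (f : PowerSeries ℚ) (P N : ℕ) :
    coeff (R := ℚ) N ((1 - X ^ P) * f) =
      coeff (R := ℚ) N f - if P ≤ N then coeff (R := ℚ) (N - P) f else 0 := by
  rw [sub_mul, one_mul, map_sub, coeff_X_pow_mul']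

theorem sup_mem {s : Multiset ℕ} (h : s ≠ 0) : s.sup ∈ s := by
  induction s using Multiset.induction with
  | empty => simp at h
  | cons a t ih =>
    rw [Multiset.sup_cons]
    rcases eq_or_ne t 0 with rfl | ht
    · simp
    · rcases le_total t.sup a with hle | hle
      · rw [sup_eq_left.2 hle]; exact Multiset.mem_cons_self a t
      · rw [sup_eq_right.2 hle]; exact Multiset.mem_cons_of_mem (ih ht)

/-- the bump-the-largest-part-by-P map on partitions -/
def bumpP {B : ℕ} (P : ℕ) (hB : 0 < B) (p : Nat.Partition B) : Nat.Partition (B + P) where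
  parts := (p.parts.sup + P) ::ₘ p.parts.erase p.parts.sup
  parts_pos := by
    intro i hi
    rcases Multiset.mem_cons.1 hi with rfl | hi'
    · have := p.parts_pos (sup_mem (fun h0 => by
        have := p.parts_sum; rw [h0] at this; simp at this; omega))
      omega
    · exact p.parts_pos (Multiset.mem_of_mem_erase hi')
  parts_sum := by
    have hne : p.parts ≠ 0 := fun h0 => by
      have := p.parts_sum; rw [h0] at this; simp at this; omega
    have hsupmem : p.parts.sup ∈ p.parts := sup_mem hne
    have hce := Multiset.cons_erase hsupmem
    have h1 : (p.parts.sup ::ₘ p.parts.erase p.parts.sup).sum = B := by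
      rw [hce, p.parts_sum]
    rw [Multiset.sum_cons] at h1 ⊢
    omega

theorem GP_le_bump (S : ℕ → Prop) (P B : ℕ) (hP : 1 ≤ P) (hB : 1 ≤ B)
    (hcl : ∀ a, 0 < a → S a → S (a + P)) : GP S B ≤ GP S (B + P) := by
  have hB0 : 0 < B := hB
  apply Finset.card_le_card_of_injOn (bumpP P hB0)
  · intro p hp
    simp only [Finset.mem_coe, mem_filter, mem_univ, true_and] at hp ⊢
    obtain ⟨hnd, hS⟩ := hp
    have hne : p.parts ≠ 0 := fun h0 => by
      have := p.parts_sum; rw [h0] at this; simp at this; omega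
    have hsupmem := sup_mem hne
    have herase : ∀ j ∈ p.parts.erase p.parts.sup, j ∈ p.parts :=
      fun j hj => Multiset.mem_of_mem_erase hj
    constructor
    · refine Multiset.nodup_cons.2 ⟨?_, hnd.erase _⟩
      intro hmem
      have := Multiset.le_sup (herase _ hmem)
      omega
    · intro j hj
      rcases Multiset.mem_cons.1 hj with rfl | hj'
      · exact hcl _ (p.parts_pos hsupmem) (hS _ hsupmem)
      · exact hS _ (herase _ hj')
  · intro p hp q hq h
    have hpe : (bumpP P hB0 p).parts = (bumpP P hB0 q).parts := by rw [h]
    have hsup : ∀ r : Nat.Partition B, (bumpP P hB0 r).parts.sup = r.parts.sup + P := by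
      intro r
      show ((r.parts.sup + P) ::ₘ r.parts.erase r.parts.sup).sup = _
      rw [Multiset.sup_cons]
      have : (r.parts.erase r.parts.sup).sup ≤ r.parts.sup :=
        Multiset.sup_le.2 fun b hb => Multiset.le_sup (Multiset.mem_of_mem_erase hb)
      exact sup_eq_left.2 (by omega)
    have hsupeq : p.parts.sup = q.parts.sup := by
      have := hsup p; rw [hpe, hsup q] at this; omega
    have hpe2 : (p.parts.sup + P) ::ₘ p.parts.erase p.parts.sup =
        (p.parts.sup + P) ::ₘ q.parts.erase q.parts.sup := by
      have : (bumpP P hB0 p).parts = (p.parts.sup + P) ::ₘ p.parts.erase p.parts.sup := rfl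
      rw [← this, hpe, hsupeq]; rfl
    have her := (Multiset.cons_inj_right _).1 hpe2
    have hnep : p.parts ≠ 0 := fun h0 => by
      have := p.parts_sum; rw [h0] at this; simp at this; omega
    have hneq : q.parts ≠ 0 := fun h0 => by
      have := q.parts_sum; rw [h0] at this; simp at this; omega
    apply Nat.Partition.ext
    rw [← Multiset.cons_erase (sup_mem hnep), her, hsupeq,
      Multiset.cons_erase (sup_mem hneq)]

theorem parts_eq_zero (p : Nat.Partition 0) : p.parts = 0 := by
  rcases eq_or_ne p.parts 0 with h | h
  · exact h
  · exfalso
    obtain ⟨a, ha⟩ := Multiset.exists_mem_of_ne_zero h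
    have h1 := p.parts_pos ha
    have h2 : a ≤ p.parts.sum := Multiset.single_le_sum (fun _ _ => Nat.zero_le _) _ ha
    rw [p.parts_sum] at h2
    omega

theorem GP_zero_le (S : ℕ → Prop) : GP S 0 ≤ 1 := by
  apply Finset.card_le_one.2
  intro p _ q _
  apply Nat.Partition.ext
  rw [parts_eq_zero p, parts_eq_zero q]

theorem GP_witness (S : ℕ → Prop) (P : ℕ) (hP : 8 ≤ P) (h3 : S 3) (hp3 : S (P - 3)) :
    1 ≤ GP S P := by
  apply Finset.card_pos.2
  refine ⟨⟨{3, P - 3}, ?_, ?_⟩, ?_⟩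
  · intro i hi
    rcases Multiset.mem_cons.1 hi with rfl | hi'
    · omega
    · have : i = P - 3 := Multiset.mem_singleton.1 hi'
      omega
  · show Multiset.sum {3, P - 3} = P
    simp [Multiset.sum_cons]
    omega
  · simp only [mem_filter, mem_univ, true_and]
    constructor
    · refine Multiset.nodup_cons.2 ⟨?_, Multiset.nodup_singleton _⟩
      rw [Multiset.mem_singleton]
      omega
    · intro j hj
      rcases Multiset.mem_cons.1 hj with rfl | hj'
      · exact h3
      · rw [Multiset.mem_singleton.1 hj']
        exact hp3

theorem core (m N : ℕ) (hm : 1 ≤ m) (h8 : 8 ≤ N + m) :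
    GP (fun i => i ≠ m ∧ i ≠ m + 1) N ≤ GP (fun i => i ≠ m ∧ i ≠ m + 1) (N + 1) := by
  have hex : ∃ K, 2 ^ K = m ∨ 2 ^ K = m + 1 ∨ N + 1 < 2 ^ K :=
    ⟨N + 2, Or.inr (Or.inr (by have := Nat.lt_two_pow_self (n := N + 2); omega))⟩
  set Sp : ℕ → Prop := fun i => i ≠ m ∧ i ≠ m + 1 with hSp
  set K := Nat.find hex with hKdef
  have hKspec := Nat.find_spec hex
  have hKmin : ∀ j < K, ¬(2 ^ j = m ∨ 2 ^ j = m + 1 ∨ N + 1 < 2 ^ j) :=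
    fun j hj => Nat.find_min hex hj
  set P := 2 ^ K with hPdef
  have hP1 : 1 ≤ P := Nat.one_le_two_pow
  set M := 2 ^ K + N + 2 with hMdef
  set Sq : ℕ → Prop := fun i => Sp i ∧ ∀ j < K, i ≠ 2 ^ j with hSq
  set T := (range M).filter (fun i => 0 < i ∧ Sp i) with hT
  have hpows : ∀ j < K, 2 ^ j ∈ T := by
    intro j hj
    have hlt : 2 ^ j < 2 ^ K := Nat.pow_lt_pow_right one_lt_two hj
    have hj' := hKmin j hj
    push_neg at hj'
    exact mem_filter.2 ⟨mem_range.2 (by omega), by positivity, hj'.1, hj'.2.1⟩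
  have htel := telescope T K hpows
  have hT' : T \ (range K).image (2 ^ ·) = (range M).filter (fun i => 0 < i ∧ Sq i) := by
    ext a
    simp only [hT, mem_sdiff, mem_filter, mem_range, mem_image, hSq]
    constructor
    · rintro ⟨⟨h1, h2, h3⟩, h4⟩
      exact ⟨h1, h2, h3, fun j hj heq => h4 ⟨j, hj, heq.symm⟩⟩
    · rintro ⟨h1, h2, h3, h4⟩
      exact ⟨⟨h1, h2, h3⟩, fun ⟨j, hj, hje⟩ => h4 j hj hje.symm⟩
  rw [hT'] at htel
  have hTmem : ∀ i, i ∈ T ↔ i < M ∧ (0 < i ∧ Sp i) := by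
    intro i
    rw [hT]
    simp only [mem_filter, mem_range]
  have hGF1 := GP_eq_coeff Sp (N + 1) M (by omega) T hTmem
  have hGF0 := GP_eq_coeff Sp N M (by omega) T hTmem
  set Tq := (range M).filter (fun i => 0 < i ∧ Sq i) with hTq
  have hTqmem : ∀ i, i ∈ Tq ↔ i < M ∧ (0 < i ∧ Sq i) := by
    intro i
    rw [hTq]
    simp only [mem_filter, mem_range]
  have hGFq1 := GP_eq_coeff Sq (N + 1) M (by omega) Tq hTqmem
  have hL := coeff_one_sub_X_mul (∏ i ∈ T, (1 + (X : PowerSeries ℚ) ^ i)) N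
  have hR := coeff_one_sub_Xpow_mul (∏ i ∈ Tq, (1 + (X : PowerSeries ℚ) ^ i)) P (N + 1)
  rw [htel] at hL
  rw [hL] at hR
  -- hR : GPSp(N+1) - GPSp(N) = GPSq(N+1) - (if P ≤ N+1 then coeff (N+1-P) else 0)
  by_cases hPN : P ≤ N + 1
  · rw [if_pos hPN] at hR
    have hPm : P = m ∨ P = m + 1 := by
      rcases hKspec with h | h | h
      · exact Or.inl h
      · exact Or.inr h
      · omega
    have hGFqB := GP_eq_coeff Sq (N + 1 - P) M (by omega) Tq hTqmem
    rw [← hGF1, ← hGF0, ← hGFq1, ← hGFqB] at hR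
    have hcl : ∀ a, 0 < a → Sq a → Sq (a + P) := by
      rintro a ha ⟨⟨ham, ham1⟩, hapow⟩
      have ha1 : a = 1 → P ≠ m := by
        intro hae hPe
        rcases Nat.eq_zero_or_pos K with hK0 | hK0
        · have : P = 1 := by rw [hPdef, hK0, pow_zero]
          omega
        · exact hapow 0 hK0 (by rw [hae, pow_zero])
      refine ⟨⟨?_, ?_⟩, ?_⟩
      · rcases hPm with h | h <;> omega
      · rcases hPm with h | h
        · by_cases haa : a = 1
          · exact absurd h (ha1 haa)
          · omega
        · omega
      · intro j hj
        have hlt : 2 ^ j < 2 ^ K := Nat.pow_lt_pow_right one_lt_two hj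
        rw [← hPdef] at hlt
        omega
    have hkey : GP Sq (N + 1 - P) ≤ GP Sq (N + 1) := by
      rcases Nat.eq_zero_or_pos (N + 1 - P) with hB0 | hB1
      · have hNP : N + 1 = P := by omega
        have hm' : m = P - 1 ∨ m = P := by rcases hPm with h | h <;> omega
        have hP8 : 8 ≤ P := by
          have h5 : 5 ≤ P := by omega
          have gen : ∀ KK : ℕ, 5 ≤ 2 ^ KK → 8 ≤ 2 ^ KK := by
            intro KK h
            rcases Nat.lt_or_ge KK 3 with h3 | h3
            · interval_cases KK <;> omega
            · have : (2 : ℕ) ^ 3 ≤ 2 ^ KK := Nat.pow_le_pow_right (by norm_num) h3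
              omega
          rw [hPdef] at h5 ⊢
          exact gen K h5
        have hw : 1 ≤ GP Sq P := by
          apply GP_witness
          · exact hP8
          · refine ⟨⟨by omega, by omega⟩, ?_⟩
            intro j hj he
            rcases Nat.lt_or_ge j 2 with h2 | h2
            · interval_cases j <;> omega
            · have h4 : (2 : ℕ) ^ 2 ≤ 2 ^ j := Nat.pow_le_pow_right (by norm_num) h2
              omega
          · refine ⟨⟨by omega, by omega⟩, ?_⟩
            intro j hj he
            have h2j : 2 ^ (j + 1) ≤ 2 ^ K := Nat.pow_le_pow_right (by norm_num) (by omega)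
            rw [pow_succ] at h2j
            rw [← hPdef] at h2j
            omega
        calc GP Sq (N + 1 - P) ≤ 1 := by rw [hB0]; exact GP_zero_le Sq
        _ ≤ GP Sq P := hw
        _ = GP Sq (N + 1) := by rw [hNP]
      · have := GP_le_bump Sq P (N + 1 - P) hP1 hB1 hcl
        have hBP : N + 1 - P + P = N + 1 := by omega
        rwa [hBP] at this
    have : (GP Sp N : ℚ) ≤ GP Sp (N + 1) := by
      have hc : (GP Sq (N + 1 - P) : ℚ) ≤ GP Sq (N + 1) := by exact_mod_cast hkey
      linarith
    exact_mod_cast this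
  · rw [if_neg hPN] at hR
    rw [← hGF1, ← hGF0, ← hGFq1] at hR
    have : (GP Sp N : ℚ) ≤ GP Sp (N + 1) := by
      have hc : (0 : ℚ) ≤ GP Sq (N + 1) := Nat.cast_nonneg _
      linarith
    exact_mod_cast this

noncomputable def Cnt (n m : ℕ) : ℕ :=
  (Finset.univ.filter (fun p : Nat.Partition n => p.parts.Nodup ∧ m ∈ p.parts)).card

theorem GP_congr {S S' : ℕ → Prop} (h : ∀ i, S i ↔ S' i) (A : ℕ) : GP S A = GP S' A := by
  unfold GP
  congr 1
  apply Finset.filter_congr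
  intro p _
  constructor
  · rintro ⟨h1, h2⟩; exact ⟨h1, fun j hj => (h j).1 (h2 j hj)⟩
  · rintro ⟨h1, h2⟩; exact ⟨h1, fun j hj => (h j).2 (h2 j hj)⟩

theorem count_remove (n x y : ℕ) (hx : 0 < x) (hxn : x ≤ n) (hxy : x ≠ y) :
    (Finset.univ.filter (fun p : Nat.Partition n =>
        (p.parts.Nodup ∧ x ∈ p.parts) ∧ y ∉ p.parts)).card =
      GP (fun i => i ≠ x ∧ i ≠ y) (n - x) := by
  unfold GP
  apply Finset.card_bij (fun (p : Nat.Partition n)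
    (hp : p ∈ Finset.univ.filter (fun p : Nat.Partition n =>
        (p.parts.Nodup ∧ x ∈ p.parts) ∧ y ∉ p.parts)) =>
    (⟨p.parts.erase x, fun {i} hi => p.parts_pos (Multiset.mem_of_mem_erase hi), by
      simp only [mem_filter, mem_univ, true_and] at hp
      have hce := Multiset.cons_erase hp.1.2
      have : (x ::ₘ p.parts.erase x).sum = n := by rw [hce, p.parts_sum]
      rw [Multiset.sum_cons] at this
      omega⟩ : Nat.Partition (n - x)))
  · intro p hp
    simp only [mem_filter, mem_univ, true_and] at hp ⊢
    obtain ⟨⟨hnd, hxm⟩, hy⟩ := hp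
    refine ⟨hnd.erase x, ?_⟩
    intro j hj
    constructor
    · intro hje
      rw [hje] at hj
      exact (Multiset.Nodup.notMem_erase hnd) hj
    · intro hje
      rw [hje] at hj
      exact hy (Multiset.mem_of_mem_erase hj)
  · intro p hp q hq h
    have hpe : p.parts.erase x = q.parts.erase x := congrArg Nat.Partition.parts h
    simp only [mem_filter, mem_univ, true_and] at hp hq
    apply Nat.Partition.ext
    rw [← Multiset.cons_erase hp.1.2, ← Multiset.cons_erase hq.1.2, hpe]
  · intro q hq
    simp only [mem_filter, mem_univ, true_and] at hq
    obtain ⟨hnd, hS⟩ := hq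
    have hxq : x ∉ q.parts := fun hmem => ((hS x hmem).1 rfl)
    refine ⟨⟨x ::ₘ q.parts, ?_, ?_⟩, ?_, ?_⟩
    · intro i hi
      rcases Multiset.mem_cons.1 hi with rfl | hi'
      · exact hx
      · exact q.parts_pos hi'
    · rw [Multiset.sum_cons, q.parts_sum]
      omega
    · simp only [mem_filter, mem_univ, true_and]
      refine ⟨⟨Multiset.nodup_cons.2 ⟨hxq, hnd⟩, Multiset.mem_cons_self x _⟩, ?_⟩
      intro hy
      rcases Multiset.mem_cons.1 hy with h' | h'
      · exact hxy h'.symm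
      · exact (hS y h').2 rfl
    · apply Nat.Partition.ext
      show (x ::ₘ q.parts).erase x = q.parts
      exact Multiset.erase_cons_head x q.parts

theorem Cnt_split (n m y : ℕ) :
    Cnt n m = (Finset.univ.filter (fun p : Nat.Partition n =>
        (p.parts.Nodup ∧ m ∈ p.parts) ∧ y ∈ p.parts)).card +
      (Finset.univ.filter (fun p : Nat.Partition n =>
        (p.parts.Nodup ∧ m ∈ p.parts) ∧ y ∉ p.parts)).card := by
  unfold Cnt
  have e1 : Finset.univ.filter (fun p : Nat.Partition n =>
        (p.parts.Nodup ∧ m ∈ p.parts) ∧ y ∈ p.parts) =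
      (Finset.univ.filter (fun p : Nat.Partition n =>
        p.parts.Nodup ∧ m ∈ p.parts)).filter (fun p => y ∈ p.parts) := by
    ext p
    simp only [mem_filter, mem_univ, true_and]
  have e2 : Finset.univ.filter (fun p : Nat.Partition n =>
        (p.parts.Nodup ∧ m ∈ p.parts) ∧ y ∉ p.parts) =
      (Finset.univ.filter (fun p : Nat.Partition n =>
        p.parts.Nodup ∧ m ∈ p.parts)).filter (fun p => ¬ y ∈ p.parts) := by
    ext p
    simp only [mem_filter, mem_univ, true_and]
  rw [e1, e2]
  exact (Finset.card_filter_add_card_filter_not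
    (fun p : Nat.Partition n => y ∈ p.parts)).symm

theorem Cnt_succ_le (n m : ℕ) (hn : 9 ≤ n) (hm : 1 ≤ m) : Cnt n (m + 1) ≤ Cnt n m := by
  by_cases hmn : m + 1 ≤ n
  · rw [Cnt_split n m (m + 1), Cnt_split n (m + 1) m]
    have hboth : (Finset.univ.filter (fun p : Nat.Partition n =>
        (p.parts.Nodup ∧ (m + 1) ∈ p.parts) ∧ m ∈ p.parts)).card =
        (Finset.univ.filter (fun p : Nat.Partition n =>
        (p.parts.Nodup ∧ m ∈ p.parts) ∧ (m + 1) ∈ p.parts)).card := by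
      congr 1
      apply Finset.filter_congr
      intro p _
      tauto
    rw [hboth]
    apply Nat.add_le_add_left
    rw [count_remove n (m + 1) m (by omega) hmn (by omega),
      count_remove n m (m + 1) (by omega) (by omega) (by omega)]
    have h1 : GP (fun i => i ≠ m + 1 ∧ i ≠ m) (n - (m + 1)) =
        GP (fun i => i ≠ m ∧ i ≠ m + 1) (n - (m + 1)) := GP_congr (fun i => by tauto) _
    rw [h1]
    have h2 := core m (n - (m + 1)) hm (by omega)
    have h3 : n - (m + 1) + 1 = n - m := by omega
    rwa [h3] at h2
  · have hzero : Cnt n (m + 1) = 0 := by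
      unfold Cnt
      rw [Finset.card_eq_zero]
      apply Finset.eq_empty_of_forall_notMem
      intro p hp
      simp only [mem_filter, mem_univ, true_and] at hp
      have : m + 1 ≤ p.parts.sum :=
        Multiset.single_le_sum (fun _ _ => Nat.zero_le _) _ hp.2
      rw [p.parts_sum] at this
      omega
    omega

theorem Cnt_mono (n : ℕ) (hn : 9 ≤ n) :
    ∀ e m : ℕ, 1 ≤ m → Cnt n (m + e) ≤ Cnt n m := by
  intro e
  induction e with
  | zero => intro m _; exact le_refl _
  | succ e ih =>
    intro m hm
    have h1 : Cnt n (m + e + 1) ≤ Cnt n (m + e) := Cnt_succ_le n (m + e) hn (by omega)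
    have h2 := ih m hm
    calc Cnt n (m + (e + 1)) = Cnt n (m + e + 1) := by ring_nf
    _ ≤ Cnt n (m + e) := h1
    _ ≤ Cnt n m := h2

theorem Cnt_zero (n : ℕ) : Cnt n 0 = 0 := by
  unfold Cnt
  rw [Finset.card_eq_zero]
  apply Finset.eq_empty_of_forall_notMem
  intro p hp
  simp only [mem_filter, mem_univ, true_and] at hp
  exact absurd (p.parts_pos hp.2) (by omega)

theorem Dk_eq_sum (r t n : ℕ) :
    Dk 2 r t n = ∑ m ∈ (range (n + 1)).filter (fun m => m % t = r % t), Cnt n m := by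
  have reg_iff : ∀ p : Nat.Partition n,
      (∀ i ∈ p.parts, p.parts.count i < 2) ↔ p.parts.Nodup := by
    intro p
    rw [Multiset.nodup_iff_count_le_one]
    constructor
    · intro h a
      by_cases ha : a ∈ p.parts
      · have := h a ha; omega
      · rw [Multiset.count_eq_zero_of_notMem ha]; omega
    · intro h i _
      have := h i; omega
  have hcardsum : ∀ t' : Multiset ℕ, (∀ x ∈ t', x < n + 1) →
      Multiset.card t' = ∑ m ∈ range (n + 1), t'.count m := by
    intro t' ht'
    rw [← Multiset.toFinset_sum_count_eq]
    apply Finset.sum_subset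
    · intro x hx
      exact mem_range.2 (ht' x (Multiset.mem_toFinset.1 hx))
    · intro x _ hx
      exact Multiset.count_eq_zero_of_notMem fun hm => hx (Multiset.mem_toFinset.2 hm)
  unfold Dk
  rw [Finset.sum_congr rfl (fun (p : Nat.Partition n) hp =>
    ?_ : ∀ p ∈ _, _ = ∑ m ∈ (range (n + 1)).filter (fun m => m % t = r % t),
      (if m ∈ p.parts then 1 else 0))]
  · rw [Finset.sum_comm]
    apply Finset.sum_congr rfl
    intro m _
    rw [← Finset.card_filter]
    unfold Cnt
    congr 1
    ext p
    simp only [mem_filter, mem_univ, true_and]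
    constructor
    · rintro ⟨h1, h2⟩
      exact ⟨(reg_iff p).1 h1, h2⟩
    · rintro ⟨h1, h2⟩
      exact ⟨(reg_iff p).2 h1, h2⟩
  · -- the per-partition card identity
    simp only [mem_filter, mem_univ, true_and] at hp
    have hnd := (reg_iff p).1 hp
    have h2 : ∀ x ∈ p.parts.filter (fun j => j % t = r % t), x < n + 1 := by
      intro x hx
      have hxp := Multiset.mem_of_mem_filter hx
      have hle : x ≤ p.parts.sum :=
        Multiset.single_le_sum (fun _ _ => Nat.zero_le _) _ hxp
      rw [p.parts_sum] at hle
      omega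
    rw [hcardsum _ h2]
    rw [← Finset.sum_subset (Finset.filter_subset
        (fun m => m % t = r % t) (range (n + 1))) ?_]
    · apply Finset.sum_congr rfl
      intro m hm
      have hQ : m % t = r % t := (mem_filter.1 hm).2
      rw [Multiset.count_filter_of_pos (p := fun j => j % t = r % t) hQ]
      by_cases hmem : m ∈ p.parts
      · rw [if_pos hmem]
        exact Multiset.count_eq_one_of_mem hnd hmem
      · rw [if_neg hmem]
        exact Multiset.count_eq_zero_of_notMem hmem
    · intro x _ hx
      apply Multiset.count_eq_zero_of_notMem
      intro hmem
      exact hx (mem_filter.2 ⟨mem_range.2 (by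
        have hxp := Multiset.mem_of_mem_filter hmem
        have hle : x ≤ p.parts.sum :=
          Multiset.single_le_sum (fun _ _ => Nat.zero_le _) _ hxp
        rw [p.parts_sum] at hle
        omega), (Multiset.mem_filter.1 hmem).2⟩)

end My

theorem stmt4 (t r s : ℕ) (ht1 : 2 ≤ t) (ht2 : t ≤ 10)
    (hr1 : 1 ≤ r) (hrs : r < s) (hst : s ≤ t) :
    ∀ n : ℕ, 9 ≤ n → Dk 2 s t n ≤ Dk 2 r t n := by
  intro n hn
  rw [My.Dk_eq_sum s t n, My.Dk_eq_sum r t n]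
  set d := s - r with hd
  set Fs := (Finset.range (n + 1)).filter (fun m => m % t = s % t) with hFs
  set Fr := (Finset.range (n + 1)).filter (fun m => m % t = r % t) with hFr
  set Fs' := Fs.filter (fun m => 0 < m) with hFs'
  have hge : ∀ m ∈ Fs', s ≤ m := by
    intro m hm
    have hm' := Finset.mem_filter.1 hm
    have hm0 : 0 < m := hm'.2
    have hmod : m % t = s % t := (Finset.mem_filter.1 hm'.1).2
    rcases Nat.lt_or_ge s t with hst' | hst'
    · have h1 : s % t = s := Nat.mod_eq_of_lt hst'
      have h2 : m % t ≤ m := Nat.mod_le m t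
      omega
    · have hseq : s = t := by omega
      have h0 : m % t = 0 := by rw [hmod, hseq, Nat.mod_self]
      have hdvd : t ∣ m := Nat.dvd_of_mod_eq_zero h0
      have := Nat.le_of_dvd hm0 hdvd
      omega
  have hrange : ∀ m ∈ Fs', m < n + 1 := by
    intro m hm
    exact Finset.mem_range.1 (Finset.mem_filter.1 (Finset.mem_filter.1 hm).1).1
  have h1 : ∑ m ∈ Fs, My.Cnt n m = ∑ m ∈ Fs', My.Cnt n m := by
    symm
    apply Finset.sum_subset (Finset.filter_subset _ _)
    intro x hx hx'
    have hx0 : x = 0 := by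
      by_contra h0
      exact hx' (Finset.mem_filter.2 ⟨hx, by omega⟩)
    rw [hx0, My.Cnt_zero]
  have h2 : ∀ m ∈ Fs', My.Cnt n m ≤ My.Cnt n (m - d) := by
    intro m hm
    have hms := hge m hm
    have heq : (m - d) + d = m := by omega
    calc My.Cnt n m = My.Cnt n ((m - d) + d) := by rw [heq]
    _ ≤ My.Cnt n (m - d) := My.Cnt_mono n hn d (m - d) (by omega)
  calc ∑ m ∈ Fs, My.Cnt n m = ∑ m ∈ Fs', My.Cnt n m := h1
  _ ≤ ∑ m ∈ Fs', My.Cnt n (m - d) := Finset.sum_le_sum h2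
  _ = ∑ m' ∈ Fs'.image (fun m => m - d), My.Cnt n m' := by
      rw [Finset.sum_image]
      intro a ha b hb hab
      have h1 := hge a ha
      have h2 := hge b hb
      have hab' : a - d = b - d := hab
      omega
  _ ≤ ∑ m' ∈ Fr, My.Cnt n m' := by
      apply Finset.sum_le_sum_of_subset
      intro x hx
      obtain ⟨m, hm, rfl⟩ := Finset.mem_image.1 hx
      have hms := hge m hm
      have hmlt := hrange m hm
      have hmod : m % t = s % t := (Finset.mem_filter.1 (Finset.mem_filter.1 hm).1).2
      refine Finset.mem_filter.2 ⟨Finset.mem_range.2 (by omega), ?_⟩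
      have hdvd : t ∣ m - s := (Nat.modEq_iff_dvd' hms).1 hmod.symm
      obtain ⟨c, hc⟩ := hdvd
      have hmd : m - d = r + t * c := by omega
      rw [hmd, Nat.add_mul_mod_self_left]
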